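/- For any partition (λ_1,…,λ_n) of nonnegative integers and any integer k ≥ λ_1, the Schur polynomial in 2n variables satisfies ∏_{i=1}^n (x_i^{1/2} + x_i^{-1/2}) · s_{(k+λ_1,…,k+λ_n,k-λ_n,…,k-λ_1)}(x_1,…,x_n,x_1^{-1},…,x_n^{-1}) = so^odd_{(λ_1,…,λ_n)}(x_1,…,x_n) · oe_{(λ_1+1/2,…,λ_n+1/2)}(x_1,…,x_n). -/

import Mathlib

noncomputable section

-- ===== auxiliary lemmas =====

lemma aux_sign_rev (n : ℕ) :
    (Equiv.Perm.sign (Fin.revPerm : Equiv.Perm (Fin n)))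
      = (-1 : ℤˣ) ^ (∑ i : Fin n, (Finset.Ioi i).card) := by
  set v : Fin n → ℚ := fun i => (i : ℚ) with hv
  have h1 := Matrix.det_permute (Fin.revPerm : Equiv.Perm (Fin n)) (Matrix.vandermonde v)
  have h2 : (Matrix.vandermonde v).submatrix ⇑(Fin.revPerm : Equiv.Perm (Fin n)) id
      = Matrix.vandermonde (fun i => v (Fin.rev i)) := by
    ext i j; simp [Matrix.vandermonde]
  have h3 : ∀ i j : Fin n, i ∈ (Finset.univ : Finset (Fin n)) → j ∈ Finset.Ioi i →
      v (Fin.rev j) - v (Fin.rev i) = -1 * (v j - v i) := by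
    intro i j _ hj'
    have hij : (i : ℕ) < (j : ℕ) := Fin.lt_def.mp (Finset.mem_Ioi.mp hj')
    have hjn := j.isLt
    simp only [hv, Fin.val_rev]
    have c1 : ((n - ((j:ℕ)+1) : ℕ) : ℚ) = (n:ℚ) - ((j:ℕ):ℚ) - 1 := by
      rw [Nat.cast_sub (by omega)]; push_cast; ring
    have c2 : ((n - ((i:ℕ)+1) : ℕ) : ℚ) = (n:ℚ) - ((i:ℕ):ℚ) - 1 := by
      rw [Nat.cast_sub (by omega)]; push_cast; ring
    rw [c1, c2]; ring
  have hV : (Matrix.vandermonde v).det ≠ 0 := by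
    rw [Matrix.det_vandermonde]
    refine Finset.prod_ne_zero_iff.mpr fun i _ => Finset.prod_ne_zero_iff.mpr fun j hj => ?_
    have hij : (i : ℕ) < (j : ℕ) := Fin.lt_def.mp (Finset.mem_Ioi.mp hj)
    have hlt : ((i:ℕ):ℚ) < ((j:ℕ):ℚ) := by exact_mod_cast hij
    simp only [hv]
    exact sub_ne_zero.mpr (ne_of_gt hlt)
  have h4 : (Matrix.vandermonde (fun i => v (Fin.rev i))).det
      = (-1 : ℚ) ^ (∑ i : Fin n, (Finset.Ioi i).card) * (Matrix.vandermonde v).det := by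
    rw [Matrix.det_vandermonde, Matrix.det_vandermonde]
    rw [← Finset.prod_pow_eq_pow_sum, ← Finset.prod_mul_distrib]
    refine Finset.prod_congr rfl fun i _ => ?_
    rw [← Finset.prod_const, ← Finset.prod_mul_distrib]
    exact Finset.prod_congr rfl fun j hj => h3 i j (Finset.mem_univ i) hj
  rw [h2, h4] at h1
  have h5 : ((-1 : ℚ) ^ (∑ i : Fin n, (Finset.Ioi i).card))
      = ((Equiv.Perm.sign (Fin.revPerm : Equiv.Perm (Fin n)) : ℤ) : ℚ) :=
    mul_right_cancel₀ hV h1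
  have h6 : ((Equiv.Perm.sign (Fin.revPerm : Equiv.Perm (Fin n)) : ℤˣ) : ℤ)
      = (((-1 : ℤˣ) ^ (∑ i : Fin n, (Finset.Ioi i).card) : ℤˣ) : ℤ) := by
    have h7 : ((Equiv.Perm.sign (Fin.revPerm : Equiv.Perm (Fin n)) : ℤ) : ℚ)
        = (-1 : ℚ) ^ (∑ i : Fin n, (Finset.Ioi i).card) := h5.symm
    push_cast
    exact_mod_cast h7
  exact Units.ext h6

lemma aux_det_block {F : Type*} [Field F] {n : ℕ} (A B : Matrix (Fin n) (Fin n) F) :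
    (Matrix.fromBlocks A B B A).det = (A - B).det * (A + B).det := by
  have h : Matrix.fromBlocks (1 : Matrix (Fin n) (Fin n) F) (-1) 0 1
        * Matrix.fromBlocks A B B A
        * Matrix.fromBlocks (1 : Matrix (Fin n) (Fin n) F) 1 0 1
      = Matrix.fromBlocks (A - B) 0 B (A + B) := by
    rw [Matrix.fromBlocks_multiply, Matrix.fromBlocks_multiply]
    simp
    refine ⟨by abel, by abel⟩
  have hd := congrArg Matrix.det h
  rw [Matrix.det_mul, Matrix.det_mul, Matrix.det_fromBlocks_zero₂₁,
    Matrix.det_fromBlocks_zero₂₁, Matrix.det_fromBlocks_zero₁₂] at hd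
  simpa using hd

lemma aux_pair {F : Type*} [Field F] (a b : F) (ha : a ≠ 0) (hb : b ≠ 0) :
    (a^2 - b^2) * ((a^2)⁻¹ - (b^2)⁻¹) * ((a^2 - (b^2)⁻¹) * (b^2 - (a^2)⁻¹))
      = -1 * (a^2 + (a^2)⁻¹ - b^2 - (b^2)⁻¹)^2 := by
  field_simp; ring

lemma aux_prod_ite_Ioi {F : Type*} [CommMonoid F] {n : ℕ} (p : Fin n) (f : Fin n → F) :
    (∏ q : Fin n, if p < q then f q else 1) = ∏ q ∈ Finset.Ioi p, f q := by
  rw [← Finset.prod_filter]; congr 1; ext q; simp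

lemma aux_xv_sq {F : Type*} [Field F] (a : F) (ha : a ≠ 0) :
    a^2 - (a^2)⁻¹ = (a - a⁻¹) * (a + a⁻¹) := by
  field_simp; ring

lemma aux_zpow1 {F : Type*} [Field F] (a : F) (t : ℤ) : (a^2)^t = a^(2*t) := by
  rw [← zpow_natCast a 2, ← zpow_mul]
  norm_num

lemma aux_zpow2 {F : Type*} [Field F] (a : F) (t : ℤ) : ((a^2)⁻¹)^t = a^(-(2*t)) := by
  rw [← zpow_natCast a 2, ← zpow_neg, ← zpow_mul]
  congr 1
  push_cast
  ring

lemma aux_final {F : Type*} [Field F] (e Pp Pm xp Dm Dp : F) (he : e ≠ 0) (hPp : Pp ≠ 0) :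
    Pp * ((e * (Dm * Dp)) / (e * (Pm * Pp) * xp^2)) = Dm / (Pm * xp) * (Dp / (1 * xp)) := by
  rw [← mul_div_assoc, show Pp * (e * (Dm * Dp)) = (e * Pp) * (Dm * Dp) from by ring,
      show e * (Pm * Pp) * xp^2 = (e * Pp) * ((Pm * xp) * xp) from by ring,
      mul_div_mul_left _ _ (mul_ne_zero he hPp), one_mul, div_mul_div_comm]

lemma aux_denom {F : Type*} [Field F] {n : ℕ} (y : Fin n → F) (hy : ∀ p, y p ≠ 0)
    (z : Fin (2*n) → F)
    (hz1 : ∀ p : Fin n, z ⟨(p:ℕ), by have := p.isLt; omega⟩ = y p ^ 2)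
    (hz2 : ∀ p : Fin n, z ⟨n + (p:ℕ), by have := p.isLt; omega⟩ = (y p ^ 2)⁻¹) :
    (∏ i : Fin (2*n), ∏ j : Fin (2*n), if i < j then z i - z j else 1)
      = (-1:F) ^ (∑ p : Fin n, (Finset.Ioi p).card)
        * (∏ p : Fin n, (y p - (y p)⁻¹) * (y p + (y p)⁻¹))
        * ∏ p : Fin n, ∏ q ∈ Finset.Ioi p,
            (y p^2 + (y p^2)⁻¹ - y q^2 - (y q^2)⁻¹)^2 := by

  set x : Fin n → F := fun p => y p ^ 2 with hx
  set e : Fin n ⊕ Fin n ≃ Fin (2*n) := finSumFinEquiv.trans (finCongr (two_mul n).symm) with he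
  have he1 : ∀ p : Fin n, (e (Sum.inl p) : ℕ) = (p:ℕ) := by
    intro p; simp [he, finCongr_apply]
  have he2 : ∀ p : Fin n, (e (Sum.inr p) : ℕ) = n + (p:ℕ) := by
    intro p; simp [he, finCongr_apply]; omega
  have hz1' : ∀ p : Fin n, z (e (Sum.inl p)) = x p := by
    intro p
    have h : e (Sum.inl p) = ⟨(p:ℕ), by have := p.isLt; omega⟩ := Fin.ext (he1 p)
    rw [h]; exact hz1 p
  have hz2' : ∀ p : Fin n, z (e (Sum.inr p)) = (x p)⁻¹ := by
    intro p
    have h : e (Sum.inr p) = ⟨n + (p:ℕ), by have := p.isLt; omega⟩ := Fin.ext (he2 p)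
    rw [h]; exact hz2 p
  have hlt11 : ∀ p q : Fin n, (e (Sum.inl p) < e (Sum.inl q)) ↔ p < q := by
    intro p q; rw [Fin.lt_def, he1, he1, Fin.lt_def]
  have hlt12 : ∀ p q : Fin n, (e (Sum.inl p) < e (Sum.inr q)) := by
    intro p q; rw [Fin.lt_def, he1, he2]; have := p.isLt; omega
  have hlt21 : ∀ p q : Fin n, ¬ (e (Sum.inr p) < e (Sum.inl q)) := by
    intro p q; rw [Fin.lt_def, he2, he1]; have := q.isLt; omega
  have hlt22 : ∀ p q : Fin n, (e (Sum.inr p) < e (Sum.inr q)) ↔ p < q := by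
    intro p q; rw [Fin.lt_def, he2, he2, Fin.lt_def]; omega
  -- step 1: reindex
  have step1 : (∏ i : Fin (2*n), ∏ j : Fin (2*n), if i < j then z i - z j else 1)
      = (∏ p : Fin n, (∏ q : Fin n, if p < q then x p - x q else 1)
            * (∏ q : Fin n, (x p - (x q)⁻¹)))
        * ∏ p : Fin n, (∏ q : Fin n, if p < q then (x p)⁻¹ - (x q)⁻¹ else 1) := by
    rw [← Equiv.prod_comp e (fun i => ∏ j : Fin (2*n), if i < j then z i - z j else 1)]
    rw [Fintype.prod_sum_type]
    congr 1
    · refine Finset.prod_congr rfl fun p _ => ?_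
      rw [← Equiv.prod_comp e (fun j => if e (Sum.inl p) < j
            then z (e (Sum.inl p)) - z j else 1)]
      rw [Fintype.prod_sum_type]
      congr 1
      · refine Finset.prod_congr rfl fun q _ => ?_
        rw [hz1' p, hz1' q]
        exact if_congr (hlt11 p q) rfl rfl
      · refine Finset.prod_congr rfl fun q _ => ?_
        rw [if_pos (hlt12 p q), hz1' p, hz2' q]
    · refine Finset.prod_congr rfl fun p _ => ?_
      rw [← Equiv.prod_comp e (fun j => if e (Sum.inr p) < j
            then z (e (Sum.inr p)) - z j else 1)]
      rw [Fintype.prod_sum_type]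
      have h1 : (∏ q : Fin n, if e (Sum.inr p) < e (Sum.inl q)
          then z (e (Sum.inr p)) - z (e (Sum.inl q)) else 1) = 1 := by
        refine Finset.prod_eq_one fun q _ => if_neg (hlt21 p q)
      rw [h1, one_mul]
      refine Finset.prod_congr rfl fun q _ => ?_
      rw [hz2' p, hz2' q]
      exact if_congr (hlt22 p q) rfl rfl
  rw [step1]
  -- step 2: split the middle product into q < p, q = p, q > p
  have step2 : ∀ p : Fin n, (∏ q : Fin n, (x p - (x q)⁻¹))
      = (∏ q : Fin n, if p < q then x p - (x q)⁻¹ else 1)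
        * (x p - (x p)⁻¹)
        * (∏ q : Fin n, if q < p then x p - (x q)⁻¹ else 1) := by
    intro p
    have key : ∀ q : Fin n, x p - (x q)⁻¹
        = (if p < q then x p - (x q)⁻¹ else 1)
          * (if q = p then x p - (x q)⁻¹ else 1)
          * (if q < p then x p - (x q)⁻¹ else 1) := by
      intro q
      rcases lt_trichotomy p q with h | h | h
      · rw [if_pos h, if_neg (by exact fun hq => absurd hq.symm (ne_of_lt h)),
          if_neg (asymm h), mul_one, mul_one]
      · rw [if_neg (by simp [h]), if_pos h.symm, if_neg (by simp [h]), one_mul, mul_one]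
      · rw [if_neg (asymm h), if_neg (ne_of_lt h), if_pos h, one_mul, one_mul]
    calc (∏ q : Fin n, (x p - (x q)⁻¹))
        = ∏ q : Fin n, ((if p < q then x p - (x q)⁻¹ else 1)
          * (if q = p then x p - (x q)⁻¹ else 1)
          * (if q < p then x p - (x q)⁻¹ else 1)) := Finset.prod_congr rfl fun q _ => key q
      _ = (∏ q : Fin n, if p < q then x p - (x q)⁻¹ else 1)
          * (∏ q : Fin n, if q = p then x p - (x q)⁻¹ else 1)
          * (∏ q : Fin n, if q < p then x p - (x q)⁻¹ else 1) := by
            rw [Finset.prod_mul_distrib, Finset.prod_mul_distrib]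
      _ = _ := by
            congr 2
            rw [Finset.prod_ite_eq' Finset.univ p (fun q => x p - (x q)⁻¹)]
            simp
  have step2' : (∏ p : Fin n, (∏ q : Fin n, if p < q then x p - x q else 1)
            * (∏ q : Fin n, (x p - (x q)⁻¹)))
      = ∏ p : Fin n, (∏ q : Fin n, if p < q then x p - x q else 1)
            * ((∏ q : Fin n, if p < q then x p - (x q)⁻¹ else 1)
              * (x p - (x p)⁻¹)
              * (∏ q : Fin n, if q < p then x p - (x q)⁻¹ else 1)) :=
    Finset.prod_congr rfl fun p _ => by rw [step2 p]
  rw [step2']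
  have step3 : (∏ p : Fin n, ∏ q : Fin n, if q < p then x p - (x q)⁻¹ else 1)
      = ∏ p : Fin n, ∏ q ∈ Finset.Ioi p, (x q - (x p)⁻¹) := by
    rw [Finset.prod_comm]
    exact Finset.prod_congr rfl fun p _ => aux_prod_ite_Ioi p _
  have dist : ∀ f g : Fin n → F, (∏ p : Fin n, f p * g p)
      = (∏ p : Fin n, f p) * (∏ p : Fin n, g p) := fun f g => Finset.prod_mul_distrib
  rw [dist, dist, dist]
  rw [step3]
  rw [show (∏ p : Fin n, ∏ q : Fin n, if p < q then x p - x q else 1)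
      = ∏ p : Fin n, ∏ q ∈ Finset.Ioi p, (x p - x q) from
    Finset.prod_congr rfl fun p _ => aux_prod_ite_Ioi p _]
  rw [show (∏ p : Fin n, ∏ q : Fin n, if p < q then x p - (x q)⁻¹ else 1)
      = ∏ p : Fin n, ∏ q ∈ Finset.Ioi p, (x p - (x q)⁻¹) from
    Finset.prod_congr rfl fun p _ => aux_prod_ite_Ioi p _]
  rw [show (∏ p : Fin n, ∏ q : Fin n, if p < q then (x p)⁻¹ - (x q)⁻¹ else 1)
      = ∏ p : Fin n, ∏ q ∈ Finset.Ioi p, ((x p)⁻¹ - (x q)⁻¹) from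
    Finset.prod_congr rfl fun p _ => aux_prod_ite_Ioi p _]
  rw [show (∏ p : Fin n, (x p - (x p)⁻¹))
      = ∏ p : Fin n, (y p - (y p)⁻¹) * (y p + (y p)⁻¹) from
    Finset.prod_congr rfl fun p _ => aux_xv_sq (y p) (hy p)]
  -- combine the four Ioi products
  have combine : (∏ p : Fin n, ∏ q ∈ Finset.Ioi p, (x p - x q))
      * (∏ p : Fin n, ∏ q ∈ Finset.Ioi p, (x p - (x q)⁻¹))
      * (∏ p : Fin n, ∏ q ∈ Finset.Ioi p, (x q - (x p)⁻¹))
      * (∏ p : Fin n, ∏ q ∈ Finset.Ioi p, ((x p)⁻¹ - (x q)⁻¹))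
      = (-1:F) ^ (∑ p : Fin n, (Finset.Ioi p).card)
        * ∏ p : Fin n, ∏ q ∈ Finset.Ioi p,
            (y p^2 + (y p^2)⁻¹ - y q^2 - (y q^2)⁻¹)^2 := by
    rw [← Finset.prod_mul_distrib, ← Finset.prod_mul_distrib, ← Finset.prod_mul_distrib]
    rw [← Finset.prod_pow_eq_pow_sum, ← Finset.prod_mul_distrib]
    refine Finset.prod_congr rfl fun p _ => ?_
    rw [← Finset.prod_mul_distrib, ← Finset.prod_mul_distrib, ← Finset.prod_mul_distrib]
    rw [← Finset.prod_const, ← Finset.prod_mul_distrib]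
    refine Finset.prod_congr rfl fun q _ => ?_
    simp only [hx]
    linear_combination aux_pair (y p) (y q) (hy p) (hy q)
  linear_combination (∏ p : Fin n, (y p - (y p)⁻¹) * (y p + (y p)⁻¹)) * combine

lemma aux_num {F : Type*} [Field F] {n : ℕ} (y : Fin n → F) (hy : ∀ p, y p ≠ 0)
    (s : ℤ) (c : Fin n → ℤ) (N : Matrix (Fin (2*n)) (Fin (2*n)) F)
    (h11 : ∀ p q : Fin n, N ⟨(p:ℕ), by have := p.isLt; omega⟩ ⟨(q:ℕ), by have := q.isLt; omega⟩
        = y p ^ (s + c q))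
    (h12 : ∀ p q : Fin n, N ⟨(p:ℕ), by have := p.isLt; omega⟩
        ⟨2*n - 1 - (q:ℕ), by have := q.isLt; omega⟩ = y p ^ (s - c q))
    (h21 : ∀ p q : Fin n, N ⟨n + (p:ℕ), by have := p.isLt; omega⟩
        ⟨(q:ℕ), by have := q.isLt; omega⟩ = y p ^ (-(s + c q)))
    (h22 : ∀ p q : Fin n, N ⟨n + (p:ℕ), by have := p.isLt; omega⟩
        ⟨2*n - 1 - (q:ℕ), by have := q.isLt; omega⟩ = y p ^ (-(s - c q))) :
    N.det = ((Equiv.Perm.sign (Fin.revPerm : Equiv.Perm (Fin n)) : ℤ) : F)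
      * ((Matrix.of fun p q : Fin n => y p ^ (c q) - y p ^ (-(c q))).det
        * (Matrix.of fun p q : Fin n => y p ^ (c q) + y p ^ (-(c q))).det) := by
  set e : Fin n ⊕ Fin n ≃ Fin (2*n) := finSumFinEquiv.trans (finCongr (two_mul n).symm) with he
  set τ : Equiv.Perm (Fin n ⊕ Fin n) := Equiv.sumCongr (1 : Equiv.Perm (Fin n)) Fin.revPerm
    with hτ
  set f : Fin n ⊕ Fin n ≃ Fin (2*n) := τ.trans e with hf
  have he1 : ∀ p : Fin n, e (Sum.inl p) = ⟨(p:ℕ), by have := p.isLt; omega⟩ := by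
    intro p; apply Fin.ext; simp [he, finCongr_apply]
  have he2 : ∀ p : Fin n, e (Sum.inr p) = ⟨n + (p:ℕ), by have := p.isLt; omega⟩ := by
    intro p; apply Fin.ext; simp [he, finCongr_apply]; omega
  have hf1 : ∀ q : Fin n, f (Sum.inl q) = ⟨(q:ℕ), by have := q.isLt; omega⟩ := by
    intro q; rw [hf]; simp only [Equiv.trans_apply, hτ, Equiv.sumCongr_apply]
    exact he1 q
  have hf2 : ∀ q : Fin n, f (Sum.inr q) = ⟨2*n - 1 - (q:ℕ), by have := q.isLt; omega⟩ := by
    intro q; rw [hf]; simp only [Equiv.trans_apply, hτ, Equiv.sumCongr_apply, Sum.map_inr]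
    rw [show (Fin.revPerm q : Fin n) = Fin.rev q from rfl]
    rw [he2 (Fin.rev q)]
    apply Fin.ext
    have := q.isLt
    simp [Fin.val_rev]
    omega
  set v : Fin n ⊕ Fin n → F := Sum.elim (fun p => y p ^ s) (fun p => y p ^ (-s)) with hv
  set A : Matrix (Fin n) (Fin n) F := Matrix.of fun p q => y p ^ (c q) with hA
  set B : Matrix (Fin n) (Fin n) F := Matrix.of fun p q => y p ^ (-(c q)) with hB
  have hsub : N.submatrix ⇑e ⇑f
      = Matrix.of fun i j => v i * (Matrix.fromBlocks A B B A) i j := by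
    ext i j
    cases i with
    | inl p =>
      cases j with
      | inl q =>
        rw [Matrix.submatrix_apply, he1 p, hf1 q]
        rw [h11 p q]
        simp only [hv, hA, Matrix.of_apply, Matrix.fromBlocks_apply₁₁, Sum.elim_inl]
        rw [← zpow_add₀ (hy p)]
      | inr q =>
        rw [Matrix.submatrix_apply, he1 p, hf2 q]
        rw [h12 p q]
        simp only [hv, hB, Matrix.of_apply, Matrix.fromBlocks_apply₁₂, Sum.elim_inl]
        rw [show s - c q = s + (-(c q)) by ring, ← zpow_add₀ (hy p)]
    | inr p =>
      cases j with
      | inl q =>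
        rw [Matrix.submatrix_apply, he2 p, hf1 q]
        rw [h21 p q]
        simp only [hv, hB, Matrix.of_apply, Matrix.fromBlocks_apply₂₁, Sum.elim_inr]
        rw [show -(s + c q) = -s + (-(c q)) by ring, ← zpow_add₀ (hy p)]
      | inr q =>
        rw [Matrix.submatrix_apply, he2 p, hf2 q]
        rw [h22 p q]
        simp only [hv, hA, Matrix.of_apply, Matrix.fromBlocks_apply₂₂, Sum.elim_inr]
        rw [show -(s - c q) = -s + c q by ring, ← zpow_add₀ (hy p)]
  have hvprod : (∏ i : Fin n ⊕ Fin n, v i) = 1 := by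
    rw [Fintype.prod_sum_type]
    simp only [hv, Sum.elim_inl, Sum.elim_inr]
    rw [← Finset.prod_mul_distrib]
    refine Finset.prod_eq_one fun p _ => ?_
    rw [← zpow_add₀ (hy p), add_neg_cancel, zpow_zero]
  have hdet1 : (N.submatrix ⇑e ⇑f).det = (A - B).det * (A + B).det := by
    rw [hsub, Matrix.det_mul_column, hvprod, one_mul, aux_det_block]
  have hperm : (N.submatrix ⇑e ⇑f).det
      = ((Equiv.Perm.sign τ : ℤ) : F) * N.det := by
    have : N.submatrix ⇑e ⇑f = (N.submatrix ⇑e ⇑e).submatrix id ⇑τ := rfl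
    rw [this, Matrix.det_permute', Matrix.det_submatrix_equiv_self]
  have hsign : Equiv.Perm.sign τ = Equiv.Perm.sign (Fin.revPerm : Equiv.Perm (Fin n)) := by
    rw [hτ, Equiv.Perm.sign_sumCongr]; simp
  have hsq : ((Equiv.Perm.sign τ : ℤ) : F) * ((Equiv.Perm.sign τ : ℤ) : F) = 1 := by
    have := Int.units_mul_self (Equiv.Perm.sign τ)
    calc ((Equiv.Perm.sign τ : ℤ) : F) * ((Equiv.Perm.sign τ : ℤ) : F)
        = (((Equiv.Perm.sign τ * Equiv.Perm.sign τ : ℤˣ) : ℤ) : F) := by push_cast; ring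
      _ = 1 := by rw [this]; simp
  calc N.det = (((Equiv.Perm.sign τ : ℤ) : F) * ((Equiv.Perm.sign τ : ℤ) : F)) * N.det := by
        rw [hsq, one_mul]
    _ = ((Equiv.Perm.sign τ : ℤ) : F) * (N.submatrix ⇑e ⇑f).det := by rw [hperm]; ring
    _ = _ := by
        have hAB1 : A - B = Matrix.of (fun p q : Fin n => y p ^ (c q) - y p ^ (-(c q))) := by
          ext p q; simp [hA, hB]
        have hAB2 : A + B = Matrix.of (fun p q : Fin n => y p ^ (c q) + y p ^ (-(c q))) := by
          ext p q; simp [hA, hB]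
        rw [hdet1, hsign, hAB1, hAB2]



/-- The field ℚ(y_1,…,y_n) of rational functions in the square-root variables
y_i = x_i^{1/2}, so that x_i = y_i². -/
abbrev K (n : ℕ) : Type := FractionRing (MvPolynomial (Fin n) ℚ)

/-- The square-root variable y_i = x_i^{1/2}. -/
def Y {n : ℕ} (i : Fin n) : K n :=
  algebraMap (MvPolynomial (Fin n) ℚ) (K n) (MvPolynomial.X i)

/-- The variable x_i = y_i². -/
def Xv {n : ℕ} (i : Fin n) : K n := (Y i) ^ 2

/-- ∏_{i<j} (z_i + z_i⁻¹ - z_j - z_j⁻¹). -/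
def xpairs {F : Type*} [Field F] {m : ℕ} (z : Fin m → F) : F :=
  ∏ i : Fin m, ∏ j : Fin m, if i < j then z i + (z i)⁻¹ - z j - (z j)⁻¹ else 1

/-- Bialternant Schur polynomial s_μ(z) = det(z_i^{μ_j+m-j}) / ∏_{i<j}(z_i - z_j). -/
def schur {F : Type*} [Field F] (m : ℕ) (μ : Fin m → ℤ) (z : Fin m → F) : F :=
  (Matrix.of fun i j : Fin m => z i ^ (μ j + m - 1 - (j : ℕ))).det /
    ∏ i : Fin m, ∏ j : Fin m, if i < j then z i - z j else 1

/-- Odd orthogonal character so^odd, indexed by the doubled partition m = 2λ,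
in the square-root variables y (x_i = y_i²). -/
def soOddD {F : Type*} [Field F] (n : ℕ) (m : Fin n → ℤ) (y : Fin n → F) : F :=
  (Matrix.of fun i j : Fin n =>
      y i ^ (m j + 2 * n - 2 * (j : ℕ) - 1) - y i ^ (-(m j + 2 * n - 2 * (j : ℕ) - 1))).det /
    ((∏ i : Fin n, (y i - (y i)⁻¹)) * xpairs fun i => (y i) ^ 2)

/-- Even orthogonal character oe, indexed by the doubled partition m = 2μ,
in the square-root variables y (x_i = y_i²). -/
def oeD {F : Type*} [Field F] (n : ℕ) (m : Fin n → ℤ) (y : Fin n → F) : F :=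
  (Matrix.of fun i j : Fin n =>
      y i ^ (m j + 2 * n - 2 * (j : ℕ) - 2) + y i ^ (-(m j + 2 * n - 2 * (j : ℕ) - 2))).det /
    ((if h : 0 < n then (if m ⟨n - 1, by omega⟩ = 0 then 2 else 1) else 1)
      * xpairs fun i => (y i) ^ 2)

lemma aux_xpairs_sq {F : Type*} [Field F] {n : ℕ} (w : Fin n → F) :
    (xpairs w)^2 = ∏ p : Fin n, ∏ q ∈ Finset.Ioi p, (w p + (w p)⁻¹ - w q - (w q)⁻¹)^2 := by
  rw [xpairs, ← Finset.prod_pow]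
  refine Finset.prod_congr rfl fun p _ => ?_
  rw [← Finset.prod_pow, ← aux_prod_ite_Ioi p (fun q => (w p + (w p)⁻¹ - w q - (w q)⁻¹)^2)]
  refine Finset.prod_congr rfl fun q _ => ?_
  split_ifs <;> simp

set_option maxHeartbeats 1000000

/-- Theorem 1 of the paper (integer-partition case): for a partition λ and an integer k ≥ λ_1,
∏_i (x_i^{1/2}+x_i^{-1/2}) · s_{(k+λ_1,…,k+λ_n,k-λ_n,…,k-λ_1)}(x_1,…,x_n,x_1⁻¹,…,x_n⁻¹)
  = so^odd_λ(x) · oe_{(λ_1+1/2,…,λ_n+1/2)}(x). -/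
theorem schur_factorization_thm1 {n : ℕ} (lam : Fin n → ℕ) (hlam : Antitone lam)
    (k : ℤ) (hk : ∀ i : Fin n, (lam i : ℤ) ≤ k) :
    (∏ i : Fin n, (Y i + (Y i)⁻¹))
      * schur (2 * n)
          (fun j => if h : (j : ℕ) < n then k + lam ⟨j, h⟩
                    else k - lam ⟨2 * n - 1 - (j : ℕ), by have := j.isLt; omega⟩)
          (fun i => if h : (i : ℕ) < n then Xv ⟨i, h⟩
                    else (Xv ⟨(i : ℕ) - n, by have := i.isLt; omega⟩)⁻¹)
      = soOddD n (fun j => 2 * (lam j : ℤ)) Y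
        * oeD n (fun j => 2 * (lam j : ℤ) + 1) Y := by
  simp only [schur, soOddD, oeD]
  set z : Fin (2*n) → K n := fun i => if h : (i:ℕ) < n then Xv ⟨(i:ℕ), h⟩
      else (Xv ⟨(i:ℕ) - n, by have := i.isLt; omega⟩)⁻¹ with hz
  set μ : Fin (2*n) → ℤ := fun j => if h : (j:ℕ) < n then k + (lam ⟨(j:ℕ), h⟩ : ℤ)
      else k - (lam ⟨2*n - 1 - (j:ℕ), by have := j.isLt; omega⟩ : ℤ) with hμ
  -- basic nonvanishing facts
  have hinj : Function.Injective (algebraMap (MvPolynomial (Fin n) ℚ) (K n)) :=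
    IsFractionRing.injective _ _
  have hy : ∀ i : Fin n, Y i ≠ 0 := by
    intro i h
    have h2 : (MvPolynomial.X i : MvPolynomial (Fin n) ℚ) = 0 := by
      apply hinj; rw [map_zero]; exact h
    exact MvPolynomial.X_ne_zero i h2
  have hY1 : ∀ i : Fin n, Y i + (Y i)⁻¹ ≠ 0 := by
    intro i h
    have h2 : Y i * Y i + 1 = 0 := by
      have h3 := mul_eq_zero_of_left h (Y i)
      rwa [add_mul, inv_mul_cancel₀ (hy i)] at h3
    have h4 : (MvPolynomial.X i * MvPolynomial.X i + 1 : MvPolynomial (Fin n) ℚ) = 0 := by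
      apply hinj
      rw [map_add, map_mul, map_one, map_zero]
      exact h2
    have h5 := congrArg (MvPolynomial.eval (fun _ => (0:ℚ))) h4
    simp at h5
  -- kill the oe coefficient
  have hodd : ∀ r : Fin n, ¬ (2 * ((lam r : ℕ) : ℤ) + 1 = 0) := fun r => by omega
  simp only [hodd, if_false, dite_eq_ite, ite_self]
  set s : ℤ := 2 * k + 2 * (n : ℤ) - 1 with hs
  set c : Fin n → ℤ := fun q => 2 * ((lam q : ℕ) : ℤ) + 2 * (n : ℤ) - 2 * ((q : ℕ) : ℤ) - 1
    with hc
  -- entry evaluation lemmas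
  have hzval1 : ∀ (i : Fin (2*n)) (p : Fin n), (i:ℕ) = (p:ℕ) → z i = Y p ^ 2 := by
    intro i p hip
    have hin : (i:ℕ) < n := by have := p.isLt; omega
    rw [hz]
    simp only []
    rw [dif_pos hin]
    have hidx : (⟨(i:ℕ), hin⟩ : Fin n) = p := Fin.ext hip
    rw [hidx]
    rfl
  have hzval2 : ∀ (i : Fin (2*n)) (p : Fin n), (i:ℕ) = n + (p:ℕ) → z i = ((Y p ^ 2)⁻¹) := by
    intro i p hip
    have hin : ¬ ((i:ℕ) < n) := by omega
    rw [hz]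
    simp only []
    rw [dif_neg hin]
    have hidx : (⟨(i:ℕ) - n, by have := i.isLt; omega⟩ : Fin n) = p :=
      Fin.ext (by show (i:ℕ) - n = (p:ℕ); omega)
    rw [hidx]
    rfl
  have hμ1 : ∀ (j : Fin (2*n)) (q : Fin n), (j:ℕ) = (q:ℕ) → μ j = k + (lam q : ℤ) := by
    intro j q hjq
    have hin : (j:ℕ) < n := by have := q.isLt; omega
    rw [hμ]
    simp only []
    rw [dif_pos hin]
    have hidx : (⟨(j:ℕ), hin⟩ : Fin n) = q := Fin.ext hjq
    rw [hidx]
  have hμ2 : ∀ (j : Fin (2*n)) (q : Fin n), (j:ℕ) = 2*n - 1 - (q:ℕ) → μ j = k - (lam q : ℤ) := by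
    intro j q hjq
    have hqn := q.isLt
    have hin : ¬ ((j:ℕ) < n) := by omega
    rw [hμ]
    simp only []
    rw [dif_neg hin]
    have hidx : (⟨2*n - 1 - (j:ℕ), by have := j.isLt; omega⟩ : Fin n) = q :=
      Fin.ext (by show 2*n - 1 - (j:ℕ) = (q:ℕ); omega)
    rw [hidx]
  -- the four entry lemmas for the Schur numerator matrix
  have h11 : ∀ p q : Fin n,
      (Matrix.of fun i j : Fin (2*n) => z i ^ (μ j + ((2*n : ℕ) : ℤ) - 1 - ((j:ℕ) : ℤ)))
        ⟨(p:ℕ), by have := p.isLt; omega⟩ ⟨(q:ℕ), by have := q.isLt; omega⟩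
      = Y p ^ (s + c q) := by
    intro p q
    simp only [Matrix.of_apply]
    rw [hzval1 _ p rfl, hμ1 _ q rfl, aux_zpow1]
    congr 1
    simp only [hs, hc]
    push_cast
    ring
  have h12 : ∀ p q : Fin n,
      (Matrix.of fun i j : Fin (2*n) => z i ^ (μ j + ((2*n : ℕ) : ℤ) - 1 - ((j:ℕ) : ℤ)))
        ⟨(p:ℕ), by have := p.isLt; omega⟩ ⟨2*n - 1 - (q:ℕ), by have := q.isLt; omega⟩
      = Y p ^ (s - c q) := by
    intro p q
    simp only [Matrix.of_apply]
    rw [hzval1 _ p rfl, hμ2 _ q rfl, aux_zpow1]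
    congr 1
    have hqn := q.isLt
    simp only [hs, hc]
    omega
  have h21 : ∀ p q : Fin n,
      (Matrix.of fun i j : Fin (2*n) => z i ^ (μ j + ((2*n : ℕ) : ℤ) - 1 - ((j:ℕ) : ℤ)))
        ⟨n + (p:ℕ), by have := p.isLt; omega⟩ ⟨(q:ℕ), by have := q.isLt; omega⟩
      = Y p ^ (-(s + c q)) := by
    intro p q
    simp only [Matrix.of_apply]
    rw [hzval2 _ p rfl, hμ1 _ q rfl, aux_zpow2]
    congr 1
    simp only [hs, hc]
    push_cast
    ring
  have h22 : ∀ p q : Fin n,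
      (Matrix.of fun i j : Fin (2*n) => z i ^ (μ j + ((2*n : ℕ) : ℤ) - 1 - ((j:ℕ) : ℤ)))
        ⟨n + (p:ℕ), by have := p.isLt; omega⟩ ⟨2*n - 1 - (q:ℕ), by have := q.isLt; omega⟩
      = Y p ^ (-(s - c q)) := by
    intro p q
    simp only [Matrix.of_apply]
    rw [hzval2 _ p rfl, hμ2 _ q rfl, aux_zpow2]
    congr 1
    have hqn := q.isLt
    simp only [hs, hc]
    omega
  have key1 : (Matrix.of fun i j : Fin (2*n) =>
        (if h : (i:ℕ) < n then Xv ⟨(i:ℕ), h⟩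
          else (Xv ⟨(i:ℕ) - n, by have := i.isLt; omega⟩)⁻¹) ^
          ((if h : (j:ℕ) < n then k + (lam ⟨(j:ℕ), h⟩ : ℤ)
            else k - (lam ⟨2*n - 1 - (j:ℕ), by have := j.isLt; omega⟩ : ℤ))
            + ((2*n : ℕ) : ℤ) - 1 - ((j:ℕ) : ℤ))).det
      = ((Equiv.Perm.sign (Fin.revPerm : Equiv.Perm (Fin n)) : ℤ) : K n)
        * ((Matrix.of fun p q : Fin n => Y p ^ (c q) - Y p ^ (-(c q))).det
          * (Matrix.of fun p q : Fin n => Y p ^ (c q) + Y p ^ (-(c q))).det) :=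
    aux_num Y hy s c _ h11 h12 h21 h22
  have hz1 : ∀ p : Fin n, z ⟨(p:ℕ), by have := p.isLt; omega⟩ = Y p ^ 2 :=
    fun p => hzval1 _ p rfl
  have hz2 : ∀ p : Fin n, z ⟨n + (p:ℕ), by have := p.isLt; omega⟩ = (Y p ^ 2)⁻¹ :=
    fun p => hzval2 _ p rfl
  have key2 : (∏ i : Fin (2*n), ∏ j : Fin (2*n), if i < j then
        (if h : (i:ℕ) < n then Xv ⟨(i:ℕ), h⟩
          else (Xv ⟨(i:ℕ) - n, by have := i.isLt; omega⟩)⁻¹)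
        - (if h : (j:ℕ) < n then Xv ⟨(j:ℕ), h⟩
          else (Xv ⟨(j:ℕ) - n, by have := j.isLt; omega⟩)⁻¹) else 1)
      = (-1 : K n) ^ (∑ p : Fin n, (Finset.Ioi p).card)
        * (∏ p : Fin n, (Y p - (Y p)⁻¹) * (Y p + (Y p)⁻¹))
        * ∏ p : Fin n, ∏ q ∈ Finset.Ioi p,
            (Y p^2 + (Y p^2)⁻¹ - Y q^2 - (Y q^2)⁻¹)^2 :=
    aux_denom Y hy _ hz1 hz2
  rw [key1, key2]
  have hsign2 : ((Equiv.Perm.sign (Fin.revPerm : Equiv.Perm (Fin n)) : ℤ) : K n)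
      = (-1 : K n) ^ (∑ p : Fin n, (Finset.Ioi p).card) := by
    rw [aux_sign_rev]
    push_cast
    norm_num
  rw [hsign2]
  have hMm : (Matrix.of fun i j : Fin n =>
        Y i ^ (2 * ((lam j : ℕ) : ℤ) + 2 * (n:ℤ) - 2 * ((j:ℕ):ℤ) - 1)
          - Y i ^ (-(2 * ((lam j : ℕ) : ℤ) + 2 * (n:ℤ) - 2 * ((j:ℕ):ℤ) - 1)))
      = Matrix.of fun p q : Fin n => Y p ^ (c q) - Y p ^ (-(c q)) := by
    ext p q
    simp only [Matrix.of_apply, hc]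
  have hMp : (Matrix.of fun i j : Fin n =>
        Y i ^ (2 * ((lam j : ℕ) : ℤ) + 1 + 2 * (n:ℤ) - 2 * ((j:ℕ):ℤ) - 2)
          + Y i ^ (-(2 * ((lam j : ℕ) : ℤ) + 1 + 2 * (n:ℤ) - 2 * ((j:ℕ):ℤ) - 2)))
      = Matrix.of fun p q : Fin n => Y p ^ (c q) + Y p ^ (-(c q)) := by
    ext p q
    simp only [Matrix.of_apply, hc]
    rw [show (2 * ((lam q : ℕ) : ℤ) + 1 + 2 * (n:ℤ) - 2 * ((q:ℕ):ℤ) - 2)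
      = 2 * ((lam q : ℕ) : ℤ) + 2 * (n:ℤ) - 2 * ((q:ℕ):ℤ) - 1 from by ring]
  rw [hMm, hMp]
  have hxp2 : ((xpairs fun i : Fin n => Y i ^ 2))^2
      = ∏ p : Fin n, ∏ q ∈ Finset.Ioi p,
          (Y p^2 + (Y p^2)⁻¹ - Y q^2 - (Y q^2)⁻¹)^2 := aux_xpairs_sq _
  rw [← hxp2]
  have hPmPp : (∏ p : Fin n, (Y p - (Y p)⁻¹) * (Y p + (Y p)⁻¹))
      = (∏ p : Fin n, (Y p - (Y p)⁻¹)) * (∏ p : Fin n, (Y p + (Y p)⁻¹)) :=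
    Finset.prod_mul_distrib
  rw [hPmPp]
  exact aux_final _ _ _ _ _ _ (pow_ne_zero _ (by norm_num))
    (Finset.prod_ne_zero_iff.mpr fun i _ => hY1 i)
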